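/- arXiv:1908.11763 — 6 statements merged into one kernel-verified Lean document; each statement's English description precedes it below -/
import Mathlib

section
/- Let Δ be an (M,N)-invariant subset of ℤ≥0 and let u ∈ {0,1}^{M+N} be its characteristic sequence on [0, M+N−1]. Then λ(u) also equals the number of M-generators of Δ in the interval [M, N+M−1]. -/
open scoped Classical

/-- `Δ ⊆ ℕ` is `(M,N)`-invariant: `Δ + M ⊆ Δ`, `Δ + N ⊆ Δ`, and cofinite. -/
def MNInvariant (M N : ℕ) (Δ : Set ℕ) : Prop :=
  (∀ k ∈ Δ, k + M ∈ Δ) ∧ (∀ k ∈ Δ, k + N ∈ Δ) ∧ (Δᶜ).Finite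

/-- The `M`-generators of `Δ`: elements `a ∈ Δ` with `a - M ∉ Δ`. -/
def Mgen (M : ℕ) (Δ : Set ℕ) : Set ℕ := {a ∈ Δ | ∀ b ∈ Δ, b + M ≠ a}

/-- If `u` is the indicator sequence of an `(M,N)`-invariant set `Δ` on `[0, M+N-1]`,
then `λ(u) = ∑_{i=0}^{M-1}(u_{i+N} - u_i)` equals the number of `M`-generators of `Δ`
in the interval `[M, N+M-1]`. -/
theorem stmt3 (M N : ℕ) (hM : 0 < M) (hN : 0 < N) (Δ : Set ℕ)
    (h : MNInvariant M N Δ) (u : ℕ → ℤ)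
    (hu : ∀ i < M + N, u i = if i ∈ Δ then 1 else 0) :
    ∑ i ∈ Finset.range M, (u (i + N) - u i)
      = ((Mgen M Δ ∩ Set.Ico M (M + N)).ncard : ℤ) := by
  classical
  obtain ⟨hMinv, hNinv, _⟩ := h
  set f : ℕ → ℤ := fun i => if i ∈ Δ then 1 else 0 with hf
  -- rewrite u's
  have h1 : ∑ i ∈ Finset.range M, (u (i + N) - u i)
      = ∑ i ∈ Finset.range M, (f (i + N) - f i) := by
    apply Finset.sum_congr rfl
    intro i hi
    have hi' := Finset.mem_range.mp hi
    rw [hu (i + N) (by omega), hu i (by omega)]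
  -- reindexing
  have h2 : ∑ i ∈ Finset.range M, (f (i + N) - f i)
      = ∑ i ∈ Finset.range N, (f (i + M) - f i) := by
    rw [Finset.sum_sub_distrib, Finset.sum_sub_distrib]
    have e1 : ∑ i ∈ Finset.range M, f (i + N) + ∑ i ∈ Finset.range N, f i
        = ∑ i ∈ Finset.range (M + N), f i := by
      rw [add_comm M N, Finset.sum_range_add]
      simp only [fun x => add_comm N x]
      exact add_comm _ _
    have e2 : ∑ i ∈ Finset.range N, f (i + M) + ∑ i ∈ Finset.range M, f i
        = ∑ i ∈ Finset.range (M + N), f i := by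
      rw [Finset.sum_range_add]
      simp only [fun x => add_comm M x]
      exact add_comm _ _
    linarith
  -- term-wise indicator
  have h3 : ∑ i ∈ Finset.range N, (f (i + M) - f i)
      = ∑ i ∈ Finset.range N, (if i + M ∈ Δ ∧ i ∉ Δ then (1:ℤ) else 0) := by
    apply Finset.sum_congr rfl
    intro i _
    by_cases hiΔ : i ∈ Δ
    · have : i + M ∈ Δ := hMinv i hiΔ
      simp [hf, hiΔ, this]
    · by_cases hiM : i + M ∈ Δ <;> simp [hf, hiΔ, hiM]
  -- the set is the image of a filter
  have hset : Mgen M Δ ∩ Set.Ico M (M + N)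
      = ↑(((Finset.range N).filter (fun i => i + M ∈ Δ ∧ i ∉ Δ)).image (· + M)) := by
    ext a
    simp only [Finset.coe_image, Finset.coe_filter, Finset.mem_range, Set.mem_image,
      Set.mem_setOf_eq, Set.mem_inter_iff, Set.mem_Ico, Mgen, Set.mem_setOf_eq]
    constructor
    · rintro ⟨⟨haΔ, hgen⟩, hM', hMN⟩
      refine ⟨a - M, ⟨by omega, ?_, ?_⟩, by omega⟩
      · rwa [Nat.sub_add_cancel hM']
      · intro hcon
        exact hgen (a - M) hcon (by omega)
    · rintro ⟨i, ⟨hiN, hiM, hiΔ⟩, rfl⟩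
      refine ⟨⟨hiM, ?_⟩, by omega, by omega⟩
      intro b hb hbe
      have : b = i := by omega
      exact hiΔ (this ▸ hb)
  rw [h1, h2, h3, hset, Set.ncard_coe_finset,
    Finset.card_image_of_injective _ (add_left_injective M)]
  rw [Finset.sum_boole]
end

section
/- Let Δ be an (M,N)-invariant subset with 0 ∉ Δ. Then codinv(ρ(Δ)) = codinv(Δ), where codinv(Δ) = ∑_{a ∈ Ngen(Δ)} #([a, a+M−1] ∩ complement(Δ)). -/
/-- The `N`-generators of `Δ`: elements `a ∈ Δ` with `a - N ∉ Δ`. -/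
def Ngen (N : ℕ) (Δ : Set ℕ) : Set ℕ := {a ∈ Δ | ∀ b ∈ Δ, b + N ≠ a}

/-- The shift map `ρ(Δ) = {k : k + 1 ∈ Δ}`. -/
def rho (Δ : Set ℕ) : Set ℕ := {k | k + 1 ∈ Δ}

/-- `codinv(Δ) = ∑_{a ∈ Ngen(Δ)} #([a, a+M-1] ∩ complement Δ)`. -/
noncomputable def codinv (M N : ℕ) (Δ : Set ℕ) : ℕ :=
  ∑ᶠ a ∈ Ngen N Δ, (Set.Ico a (a + M) ∩ Δᶜ).ncard

/-- If `0 ∉ Δ` then `codinv(ρ(Δ)) = codinv(Δ)`. -/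
theorem stmt7 (M N : ℕ) (hM : 0 < M) (hN : 0 < N) (Δ : Set ℕ)
    (h : MNInvariant M N Δ) (h0 : 0 ∉ Δ) :
    codinv M N (rho Δ) = codinv M N Δ := by
  have himg : Ngen N Δ = (· + 1) '' Ngen N (rho Δ) := by
    ext a
    simp only [Set.mem_image, Ngen, rho, Set.mem_setOf_eq]
    constructor
    · rintro ⟨haΔ, hgen⟩
      obtain ⟨b, rfl⟩ : ∃ b, a = b + 1 := by
        cases a with
        | zero => exact absurd haΔ h0
        | succ n => exact ⟨n, rfl⟩
      exact ⟨b, ⟨haΔ, fun c hc hcn => hgen (c + 1) hc (by omega)⟩, rfl⟩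
    · rintro ⟨b, ⟨hb, hgen⟩, rfl⟩
      refine ⟨hb, fun c hc hcn => ?_⟩
      obtain ⟨d, rfl⟩ : ∃ d, c = d + 1 := by
        cases c with
        | zero => exact absurd hc h0
        | succ n => exact ⟨n, rfl⟩
      exact hgen d hc (by omega)
  unfold codinv
  rw [himg, finsum_mem_image (fun x _ y _ hxy => by omega)]
  apply finsum_mem_congr rfl
  intro a _
  have key : Set.Ico (a + 1) (a + 1 + M) ∩ Δᶜ
      = (· + 1) '' (Set.Ico a (a + M) ∩ (rho Δ)ᶜ) := by
    ext y
    simp only [Set.mem_image, Set.mem_inter_iff, Set.mem_Ico, Set.mem_compl_iff,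
      rho, Set.mem_setOf_eq]
    constructor
    · rintro ⟨⟨h1, h2⟩, h3⟩
      obtain ⟨x, rfl⟩ : ∃ x, y = x + 1 := ⟨y - 1, by omega⟩
      exact ⟨x, ⟨⟨by omega, by omega⟩, h3⟩, rfl⟩
    · rintro ⟨x, ⟨⟨h1, h2⟩, h3⟩, rfl⟩
      exact ⟨⟨by omega, by omega⟩, h3⟩
  rw [key, Set.ncard_image_of_injective _ (fun x y hxy => by omega)]
end

section
/- Let Δ be an (M,N)-invariant subset with 0 ∈ Δ. Then codinv(ρ(Δ)) = codinv(Δ) − #([0,M−1] ∩ complement(Δ)) + #([N, N+M−1] ∩ complement(Δ)). -/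
lemma Ngen_finite (N : ℕ) (Δ : Set ℕ) (hc : (Δᶜ).Finite) : (Ngen N Δ).Finite := by
  apply Set.Finite.subset ((Set.finite_Ico 0 N).union (hc.image (fun x => x + N)))
  intro a ha
  rcases lt_or_ge a N with hlt | hge
  · exact Or.inl ⟨Nat.zero_le a, hlt⟩
  · right
    refine ⟨a - N, ?_, ?_⟩
    · intro hmem
      exact ha.2 (a - N) hmem (by omega)
    · show a - N + N = a
      omega

/-- If `0 ∈ Δ` then
`codinv(ρ(Δ)) = codinv(Δ) - #([0,M-1] ∩ Δᶜ) + #([N,N+M-1] ∩ Δᶜ)`. -/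
theorem stmt8 (M N : ℕ) (hM : 0 < M) (hN : 0 < N) (Δ : Set ℕ)
    (h : MNInvariant M N Δ) (h0 : 0 ∈ Δ) :
    (codinv M N (rho Δ) : ℤ)
      = (codinv M N Δ : ℤ) - ((Set.Ico 0 M ∩ Δᶜ).ncard : ℤ)
        + ((Set.Ico N (N + M) ∩ Δᶜ).ncard : ℤ) := by
  obtain ⟨hMinv, hNinv, hc⟩ := h
  have hNΔ : N ∈ Δ := by simpa using hNinv 0 h0
  set f : ℕ → ℕ := fun c => (Set.Ico c (c + M) ∩ Δᶜ).ncard with hf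
  have hfval : ∀ c, f c = (Set.Ico c (c + M) ∩ Δᶜ).ncard := fun c => rfl
  -- the shifted counting identity
  have hshift : ∀ a, (Set.Ico a (a + M) ∩ (rho Δ)ᶜ).ncard = f (a + 1) := by
    intro a
    have himg : (fun x => x + 1) '' (Set.Ico a (a + M) ∩ (rho Δ)ᶜ)
        = Set.Ico (a + 1) (a + 1 + M) ∩ Δᶜ := by
      ext c
      simp only [Set.mem_image, Set.mem_inter_iff, Set.mem_Ico, Set.mem_compl_iff]
      constructor
      · rintro ⟨k, ⟨⟨hk1, hk2⟩, hk3⟩, rfl⟩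
        exact ⟨⟨by omega, by omega⟩, hk3⟩
      · rintro ⟨⟨hc1, hc2⟩, hc3⟩
        refine ⟨c - 1, ⟨⟨by omega, by omega⟩, ?_⟩, by omega⟩
        show ¬ (c - 1 + 1 ∈ Δ)
        rwa [Nat.sub_add_cancel (by omega)]
    rw [hfval, ← himg, Set.ncard_image_of_injective _ (add_left_injective 1)]
  -- image of the generators of rho Δ
  have himage : (fun a => a + 1) '' Ngen N (rho Δ) = (Ngen N Δ \ {0}) ∪ {N} := by
    ext c
    simp only [Set.mem_image, Set.mem_union, Set.mem_diff, Set.mem_singleton_iff,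
      Ngen, rho, Set.mem_setOf_eq, Set.mem_sep_iff]
    constructor
    · rintro ⟨a, ⟨ha1, ha2⟩, rfl⟩
      by_cases hcN : a + 1 = N
      · exact Or.inr hcN
      · left
        refine ⟨⟨ha1, ?_⟩, by omega⟩
        intro b hb hbc
        rcases Nat.eq_zero_or_pos b with rfl | hbpos
        · omega
        · refine ha2 (b - 1) ?_ (by omega)
          rwa [Nat.sub_add_cancel hbpos]
    · rintro (⟨⟨hc1, hc2⟩, hc0⟩ | hceq)
      · refine ⟨c - 1, ⟨?_, ?_⟩, by omega⟩
        · rwa [Nat.sub_add_cancel (by omega)]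
        · intro b hb hbc
          exact hc2 (b + 1) hb (by omega)
      · refine ⟨c - 1, ⟨?_, ?_⟩, by omega⟩
        · rw [Nat.sub_add_cancel (by omega)]
          exact hceq ▸ hNΔ
        · intro b hb hbc
          omega
  have hfin : (Ngen N Δ).Finite := Ngen_finite N Δ hc
  have hNnot : N ∉ Ngen N Δ := fun hg => hg.2 0 h0 (by omega)
  have h0gen : 0 ∈ Ngen N Δ := ⟨h0, fun b _ hb => by omega⟩
  -- rewrite codinv of rho Δ
  have key : codinv M N (rho Δ)
      = (∑ᶠ c ∈ Ngen N Δ \ {0}, f c) + f N := by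
    rw [codinv]
    rw [finsum_mem_congr rfl (fun a _ => hshift a)]
    rw [← finsum_mem_image (f := f) (g := fun a => a + 1)
      (fun x _ y _ hxy => by simpa using hxy)]
    rw [himage, finsum_mem_union (by simp [Set.disjoint_singleton_right, hNnot])
      (hfin.diff (t := {0})) (Set.finite_singleton N), finsum_mem_singleton]
  have keyΔ : codinv M N Δ = f 0 + ∑ᶠ c ∈ Ngen N Δ \ {0}, f c := by
    rw [codinv]
    have hins : Ngen N Δ = insert 0 (Ngen N Δ \ {0}) := by
      rw [Set.insert_diff_singleton, Set.insert_eq_of_mem h0gen]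
    exact (finsum_mem_congr hins (fun x _ => rfl)).trans
      (finsum_mem_insert f (by simp) (hfin.diff (t := {0})))
  have hf0 : f 0 = (Set.Ico 0 M ∩ Δᶜ).ncard := by rw [hfval]; norm_num
  have hfN : f N = (Set.Ico N (N + M) ∩ Δᶜ).ncard := rfl
  rw [key, keyΔ, ← hf0, ← hfN]
  push_cast
  ring
end

section
/- Let u ∈ {0,1}^{M+N} be admissible with λ(u) = 0. Extend u to a periodic infinite sequence ũ of period M+N. Then ũ is both M-periodic and N-periodic, and hence p-periodic for some p dividing gcd(M,N). -/
/-- `u` is admissible if it is the restriction to `[0, M+N-1]` of the indicator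
function of some `(M,N)`-invariant subset. -/
def Admissible (M N : ℕ) (u : ℕ → ℕ) : Prop :=
  ∃ Δ : Set ℕ, MNInvariant M N Δ ∧ ∀ i < M + N, (i ∈ Δ ↔ u i = 1)

/-- The `(M+N)`-periodic extension `ũ : ℤ → ℕ` of `u`. -/
def utilde (M N : ℕ) (u : ℕ → ℕ) (i : ℤ) : ℕ := u ((i % ((M : ℤ) + N)).toNat)

/-- Helper: if `u` is "N-shift invariant on [0,M)" and "M-shift invariant on [0,N)",
then `ũ` is `N`-periodic. -/
lemma utilde_shift (M N : ℕ) (u : ℕ → ℕ)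
    (h1 : ∀ i < M, u (i + N) = u i) (h2 : ∀ j < N, u (j + M) = u j) :
    ∀ i : ℤ, utilde M N u (i + N) = utilde M N u i := by
  intro i
  set C : ℤ := (M : ℤ) + N with hC
  have hCpos : 0 < C ∨ C = 0 := by
    rcases Nat.eq_zero_or_pos (M + N) with h | h
    · right; simp [hC]; omega
    · left; have : (0:ℤ) < (M:ℤ) + N := by exact_mod_cast h
      simpa [hC] using this
  rcases hCpos with hCpos | hC0
  swap
  · have hmn : (M:ℤ) + N = 0 := by rw [← hC]; exact hC0
    have hN0 : N = 0 := by omega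
    simp [hN0]
  · have hiC : 0 ≤ i % C := Int.emod_nonneg i (by omega)
    have hiC2 : i % C < C := Int.emod_lt_of_pos i hCpos
    set r : ℕ := (i % C).toNat with hr
    have hrC : (r : ℤ) = i % C := Int.toNat_of_nonneg hiC
    have hrlt : r < M + N := by
      have : (r : ℤ) < (M : ℤ) + N := by rw [hrC]; exact hiC2
      exact_mod_cast this
    have hmod : (i + N) % C = ((r : ℤ) + N) % C := by
      rw [hrC, Int.emod_add_emod]
    unfold utilde
    rw [← hC, hmod]
    rw [← hr]
    by_cases hrM : r < M
    · have : ((r : ℤ) + N) % C = (r : ℤ) + N := by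
        apply Int.emod_eq_of_lt (by positivity)
        rw [hC]; exact_mod_cast (by omega : r + N < M + N)
      rw [this]
      have : ((r : ℤ) + (N : ℤ)).toNat = r + N := by omega
      rw [this, h1 r hrM]
    · have hge : M ≤ r := by omega
      have : ((r : ℤ) + N) % C = (r : ℤ) - M := by
        rw [show (r:ℤ) + N = ((r:ℤ) - M) + C * 1 by rw [hC]; ring,
          Int.add_mul_emod_self_left]
        apply Int.emod_eq_of_lt (by exact_mod_cast (by omega : (0:ℤ) ≤ (r:ℤ) - M))
        rw [hC]
        have : (r : ℤ) < (M : ℤ) + N := by exact_mod_cast hrlt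
        omega
      rw [this]
      have ht : ((r : ℤ) - (M : ℤ)).toNat = r - M := by omega
      rw [ht]
      have := h2 (r - M) (by omega)
      rw [(by omega : r - M + M = r)] at this
      exact this.symm

lemma utilde_comm (M N : ℕ) (u : ℕ → ℕ) : utilde M N u = utilde N M u := by
  funext i; unfold utilde; rw [add_comm]

/-- If `u` is admissible with `λ(u) = 0`, then the periodic extension `ũ` is both
`M`-periodic and `N`-periodic, and hence `p`-periodic for some `p ∣ gcd(M,N)`. -/
theorem stmt10 (M N : ℕ) (hM : 0 < M) (hN : 0 < N) (u : ℕ → ℕ)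
    (hbin : ∀ i < M + N, u i ≤ 1) (hadm : Admissible M N u)
    (hlam : ∑ i ∈ Finset.range M, ((u (i + N) : ℤ) - (u i : ℤ)) = 0) :
    (∀ i : ℤ, utilde M N u (i + M) = utilde M N u i) ∧
    (∀ i : ℤ, utilde M N u (i + N) = utilde M N u i) ∧
    ∃ p : ℕ, 0 < p ∧ p ∣ Nat.gcd M N ∧
      ∀ i : ℤ, utilde M N u (i + p) = utilde M N u i := by
  obtain ⟨Δ, ⟨hΔM, hΔN, _⟩, hind⟩ := hadm
  -- nonnegativity of terms
  have hnnN : ∀ i ∈ Finset.range M, (0:ℤ) ≤ (u (i + N) : ℤ) - u i := by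
    intro i hi
    rw [Finset.mem_range] at hi
    rcases Nat.lt_or_ge (u i) 1 with h | h
    · have : u i = 0 := by omega
      simp [this]
    · have hui : u i = 1 := le_antisymm (hbin i (by omega)) h
      have hiΔ : i ∈ Δ := (hind i (by omega)).2 hui
      have : u (i + N) = 1 := (hind (i + N) (by omega)).1 (hΔN i hiΔ)
      simp [this, hui]
  have hnnM : ∀ j ∈ Finset.range N, (0:ℤ) ≤ (u (j + M) : ℤ) - u j := by
    intro j hj
    rw [Finset.mem_range] at hj
    rcases Nat.lt_or_ge (u j) 1 with h | h
    · have : u j = 0 := by omega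
      simp [this]
    · have huj : u j = 1 := le_antisymm (hbin j (by omega)) h
      have hjΔ : j ∈ Δ := (hind j (by omega)).2 huj
      have : u (j + M) = 1 := (hind (j + M) (by omega)).1 (hΔM j hjΔ)
      simp [this, huj]
  -- the symmetric sum is also zero
  have hA : ∑ i ∈ Finset.range M, (u (i + N) : ℤ) = ∑ i ∈ Finset.Ico N (N + M), (u i : ℤ) := by
    rw [Finset.sum_Ico_eq_sum_range]
    simp [add_comm]
  have hC : ∑ j ∈ Finset.range N, (u (j + M) : ℤ) = ∑ j ∈ Finset.Ico M (M + N), (u j : ℤ) := by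
    rw [Finset.sum_Ico_eq_sum_range]
    simp [add_comm]
  have htot1 : ∑ i ∈ Finset.range N, (u i : ℤ) + ∑ i ∈ Finset.Ico N (N + M), (u i : ℤ)
      = ∑ i ∈ Finset.range (N + M), (u i : ℤ) := by
    rw [Finset.range_eq_Ico, Finset.range_eq_Ico]
    exact Finset.sum_Ico_consecutive _ (Nat.zero_le N) (Nat.le_add_right N M)
  have htot2 : ∑ i ∈ Finset.range M, (u i : ℤ) + ∑ i ∈ Finset.Ico M (M + N), (u i : ℤ)
      = ∑ i ∈ Finset.range (M + N), (u i : ℤ) := by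
    rw [Finset.range_eq_Ico, Finset.range_eq_Ico]
    exact Finset.sum_Ico_consecutive _ (Nat.zero_le M) (Nat.le_add_right M N)
  have htoteq : ∑ i ∈ Finset.range (N + M), (u i : ℤ) = ∑ i ∈ Finset.range (M + N), (u i : ℤ) := by
    rw [Nat.add_comm]
  have hlam2 : ∑ j ∈ Finset.range N, ((u (j + M) : ℤ) - (u j : ℤ)) = 0 := by
    rw [Finset.sum_sub_distrib] at hlam ⊢
    rw [hA] at hlam
    rw [hC]
    linarith
  -- termwise equalities
  have hstepN : ∀ i < M, u (i + N) = u i := by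
    intro i hi
    have := (Finset.sum_eq_zero_iff_of_nonneg hnnN).mp hlam i (Finset.mem_range.mpr hi)
    omega
  have hstepM : ∀ j < N, u (j + M) = u j := by
    intro j hj
    have := (Finset.sum_eq_zero_iff_of_nonneg hnnM).mp hlam2 j (Finset.mem_range.mpr hj)
    omega
  have hNper : ∀ i : ℤ, utilde M N u (i + N) = utilde M N u i :=
    utilde_shift M N u hstepN hstepM
  have hMper : ∀ i : ℤ, utilde M N u (i + M) = utilde M N u i := by
    intro i
    rw [utilde_comm M N u]
    exact utilde_shift N M u hstepM hstepN i
  refine ⟨hMper, hNper, Nat.gcd M N, Nat.gcd_pos_of_pos_left N hM, dvd_rfl, ?_⟩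
  have hPM : Function.Periodic (utilde M N u) (M : ℤ) := hMper
  have hPN : Function.Periodic (utilde M N u) (N : ℤ) := hNper
  have hgcd : (Nat.gcd M N : ℤ) = M * Nat.gcdA M N + N * Nat.gcdB M N :=
    Nat.gcd_eq_gcd_ab M N
  have hP : Function.Periodic (utilde M N u) ((Nat.gcd M N : ℤ)) := by
    rw [hgcd]
    have h1 := hPM.int_mul (Nat.gcdA M N)
    have h2 := hPN.int_mul (Nat.gcdB M N)
    have := h1.add_period h2
    simpa [mul_comm] using this
  exact hP
end

section
/- For any (M,N)-invariant subset Δ disjoint from [0, M+N−1], codinv(Δ) = codinv(Δ − (M+N)), i.e., codinv is invariant under shifting down by M+N. -/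
/-- For an `(M,N)`-invariant subset `Δ` disjoint from `[0, M+N-1]`,
`codinv(Δ) = codinv(Δ - (M+N))`. -/
theorem stmt13 (M N : ℕ) (hM : 0 < M) (hN : 0 < N) (Δ : Set ℕ)
    (h : MNInvariant M N Δ) (hdisj : ∀ i < M + N, i ∉ Δ) :
    codinv M N Δ = codinv M N {k : ℕ | k + (M + N) ∈ Δ} := by
  set Δ' : Set ℕ := {k | k + (M + N) ∈ Δ} with hΔ'
  have hgen : Ngen N Δ = (fun k => k + (M + N)) '' Ngen N Δ' := by
    ext a
    constructor
    · rintro ⟨haΔ, hnb⟩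
      have hge : M + N ≤ a := by
        by_contra hlt
        exact hdisj a (by omega) haΔ
      refine ⟨a - (M + N), ⟨?_, ?_⟩, Nat.sub_add_cancel hge⟩
      · show (a - (M + N)) + (M + N) ∈ Δ; rwa [Nat.sub_add_cancel hge]
      · intro b hb hba
        exact hnb (b + (M + N)) hb (by omega)
    · rintro ⟨a', ⟨ha', hnb⟩, heq⟩
      simp only at heq
      subst heq
      refine ⟨ha', ?_⟩
      intro b hbΔ hba
      have hbge : M + N ≤ b := by
        by_contra hlt; exact hdisj b (by omega) hbΔ
      refine hnb (b - (M + N)) ?_ (by omega)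
      show (b - (M + N)) + (M + N) ∈ Δ; rwa [Nat.sub_add_cancel hbge]
  unfold codinv
  rw [hgen, finsum_mem_image (fun x _ y _ hxy => Nat.add_right_cancel hxy)]
  apply finsum_mem_congr rfl
  intro a ha
  have hset : Set.Ico (a + (M + N)) (a + (M + N) + M) ∩ Δᶜ
      = (fun k => k + (M + N)) '' (Set.Ico a (a + M) ∩ Δ'ᶜ) := by
    ext x
    simp only [Set.mem_inter_iff, Set.mem_Ico, Set.mem_compl_iff, Set.mem_image,
      Set.mem_setOf_eq, hΔ']
    constructor
    · rintro ⟨⟨h1, h2⟩, h3⟩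
      refine ⟨x - (M + N), ⟨⟨by omega, by omega⟩, ?_⟩, by omega⟩
      show ¬ (x - (M + N)) + (M + N) ∈ Δ
      rwa [Nat.sub_add_cancel (by omega)]
    · rintro ⟨y, ⟨⟨h1, h2⟩, h3⟩, heq⟩
      subst heq
      exact ⟨⟨by omega, by omega⟩, h3⟩
  rw [hset, Set.ncard_image_of_injective _ (fun x y hxy => by omega)]
end

section
/- For (M,N) = (2,2): the generating function P_{0000}(q,t) = ∑ q^{area(Δ)} t^{codinv(Δ)} over all (2,2)-invariant subsets Δ ⊆ ℤ≥0 disjoint from {0,1,2,3} equals q^4/(1−q) + q^5 t/(1−q)^2 as an element of ℤ[t][[q]]. -/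
/-- `Δ ⊆ ℕ` is `(2,2)`-invariant: `Δ + 2 ⊆ Δ` and cofinite. -/
def Inv22 (Δ : Set ℕ) : Prop := (∀ k ∈ Δ, k + 2 ∈ Δ) ∧ (Δᶜ).Finite

/-- `area(Δ)` is the number of gaps of `Δ`. -/
noncomputable def area (Δ : Set ℕ) : ℕ := (Δᶜ).ncard

/-- The `2`-generators of `Δ`. -/
def Ngen2 (Δ : Set ℕ) : Set ℕ := {a ∈ Δ | ∀ b ∈ Δ, b + 2 ≠ a}

/-- `codinv(Δ) = ∑_{a ∈ Ngen(Δ)} #([a, a+1] ∩ complement Δ)` for `(M,N) = (2,2)`. -/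
noncomputable def codinv22 (Δ : Set ℕ) : ℕ :=
  ∑ᶠ a ∈ Ngen2 Δ, (Set.Ico a (a + 2) ∩ Δᶜ).ncard

/-- The standard (2,2)-invariant set with least even element `2m`, least odd `2n+1`. -/
def Dset (m n : ℕ) : Set ℕ :=
  {x | (∃ j, x = 2*j ∧ m ≤ j) ∨ (∃ j, x = 2*j+1 ∧ n ≤ j)}

lemma mem_Dset_even {m n j : ℕ} : 2*j ∈ Dset m n ↔ m ≤ j := by
  constructor
  · rintro (⟨i, hi, hmi⟩ | ⟨i, hi, hni⟩) <;> omega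
  · intro h; exact Or.inl ⟨j, rfl, h⟩

lemma mem_Dset_odd {m n j : ℕ} : 2*j+1 ∈ Dset m n ↔ n ≤ j := by
  constructor
  · rintro (⟨i, hi, hmi⟩ | ⟨i, hi, hni⟩) <;> omega
  · intro h; exact Or.inr ⟨j, rfl, h⟩

lemma compl_Dset (m n : ℕ) :
    (Dset m n)ᶜ = ↑((Finset.range m).image (fun i => 2*i) ∪
      (Finset.range n).image (fun i => 2*i+1)) := by
  ext x
  simp only [Set.mem_compl_iff, Finset.coe_union, Set.mem_union, Finset.coe_image,
    Finset.coe_range, Set.mem_image, Set.mem_Iio]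
  constructor
  · intro hx
    rcases Nat.even_or_odd x with ⟨j, hj⟩ | ⟨j, hj⟩
    · refine Or.inl ⟨j, ?_, by omega⟩
      by_contra h
      exact hx (by rw [show x = 2*j by omega]; exact mem_Dset_even.mpr (by omega))
    · refine Or.inr ⟨j, ?_, by omega⟩
      by_contra h
      exact hx (by rw [show x = 2*j+1 by omega]; exact mem_Dset_odd.mpr (by omega))
  · rintro (⟨j, hj, rfl⟩ | ⟨j, hj, rfl⟩)
    · rw [mem_Dset_even]; omega
    · rw [mem_Dset_odd]; omega

lemma inv22_Dset (m n : ℕ) : Inv22 (Dset m n) := by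
  constructor
  · rintro k (⟨j, rfl, hj⟩ | ⟨j, rfl, hj⟩)
    · exact Or.inl ⟨j+1, by omega, by omega⟩
    · exact Or.inr ⟨j+1, by omega, by omega⟩
  · rw [compl_Dset]; exact (Finset.finite_toSet _)

lemma area_Dset (m n : ℕ) : area (Dset m n) = m + n := by
  rw [area, compl_Dset, Set.ncard_coe_finset, Finset.card_union_of_disjoint, Finset.card_image_of_injective,
    Finset.card_image_of_injective, Finset.card_range, Finset.card_range]
  · intro a b h; dsimp only at h; omega
  · intro a b h; dsimp only at h; omega
  · rw [Finset.disjoint_left]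
    rintro a ha hb
    simp only [Finset.mem_image, Finset.mem_range] at ha hb
    omega

lemma Ngen2_Dset (m n : ℕ) : Ngen2 (Dset m n) = {2*m, 2*n+1} := by
  ext a
  simp only [Ngen2, Set.mem_setOf_eq, Set.mem_insert_iff, Set.mem_singleton_iff]
  constructor
  · rintro ⟨(⟨j, rfl, hj⟩ | ⟨j, rfl, hj⟩), hb⟩
    · left
      rcases Nat.lt_or_ge m j with h | h
      · exact absurd (by omega : 2*(j-1)+2 = 2*j) (hb (2*(j-1)) (mem_Dset_even.mpr (by omega)))
      · omega
    · right
      rcases Nat.lt_or_ge n j with h | h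
      · exact absurd (by omega : 2*(j-1)+1+2 = 2*j+1) (hb (2*(j-1)+1) (mem_Dset_odd.mpr (by omega)))
      · omega
  · rintro (rfl | rfl)
    · refine ⟨mem_Dset_even.mpr le_rfl, ?_⟩
      rintro b (⟨j, rfl, hj⟩ | ⟨j, rfl, hj⟩) <;> omega
    · refine ⟨mem_Dset_odd.mpr le_rfl, ?_⟩
      rintro b (⟨j, rfl, hj⟩ | ⟨j, rfl, hj⟩) <;> omega

lemma codinv_Dset (m n : ℕ) :
    codinv22 (Dset m n) = (if m < n then 1 else 0) + (if n + 2 ≤ m then 1 else 0) := by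
  rw [codinv22, Ngen2_Dset, finsum_mem_pair (by omega : 2*m ≠ 2*n+1)]
  congr 1
  · rcases Nat.lt_or_ge m n with h | h
    · rw [if_pos h]
      have : Set.Ico (2*m) (2*m+2) ∩ (Dset m n)ᶜ = {2*m+1} := by
        ext x
        simp only [Set.mem_inter_iff, Set.mem_Ico, Set.mem_compl_iff, Set.mem_singleton_iff]
        constructor
        · rintro ⟨⟨h1, h2⟩, h3⟩
          rcases (by omega : x = 2*m ∨ x = 2*m+1) with rfl | rfl
          · exact absurd (mem_Dset_even.mpr le_rfl) h3
          · rfl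
        · rintro rfl
          exact ⟨⟨by omega, by omega⟩, fun hc => by rw [mem_Dset_odd] at hc; omega⟩
      rw [this, Set.ncard_singleton]
    · rw [if_neg (by omega)]
      have : Set.Ico (2*m) (2*m+2) ∩ (Dset m n)ᶜ = ∅ := by
        ext x
        simp only [Set.mem_inter_iff, Set.mem_Ico, Set.mem_compl_iff, Set.mem_empty_iff_false,
          iff_false, not_and]
        rintro ⟨h1, h2⟩
        rcases (by omega : x = 2*m ∨ x = 2*m+1) with rfl | rfl
        · simp [mem_Dset_even]
        · simp [mem_Dset_odd]; omega
      rw [this, Set.ncard_empty]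
  · rcases Nat.lt_or_ge (n+1) m with h | h
    · rw [if_pos (by omega)]
      have : Set.Ico (2*n+1) (2*n+1+2) ∩ (Dset m n)ᶜ = {2*n+2} := by
        ext x
        simp only [Set.mem_inter_iff, Set.mem_Ico, Set.mem_compl_iff, Set.mem_singleton_iff]
        constructor
        · rintro ⟨⟨h1, h2⟩, h3⟩
          rcases (by omega : x = 2*n+1 ∨ x = 2*n+2) with rfl | rfl
          · exact absurd (mem_Dset_odd.mpr le_rfl) h3
          · rfl
        · rintro rfl
          refine ⟨⟨by omega, by omega⟩, fun hc => ?_⟩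
          rw [show 2*n+2 = 2*(n+1) by ring, mem_Dset_even] at hc; omega
      rw [this, Set.ncard_singleton]
    · rw [if_neg (by omega)]
      have : Set.Ico (2*n+1) (2*n+1+2) ∩ (Dset m n)ᶜ = ∅ := by
        ext x
        simp only [Set.mem_inter_iff, Set.mem_Ico, Set.mem_compl_iff, Set.mem_empty_iff_false,
          iff_false, not_and]
        rintro ⟨h1, h2⟩
        rcases (by omega : x = 2*n+1 ∨ x = 2*n+2) with rfl | rfl
        · simp [mem_Dset_odd]
        · rw [not_not, show 2*n+2 = 2*(n+1) by ring, mem_Dset_even]; omega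
      rw [this, Set.ncard_empty]

lemma Dset_add_shift {Δ : Set ℕ} (hi : ∀ k ∈ Δ, k + 2 ∈ Δ) {x : ℕ} (hx : x ∈ Δ) (d : ℕ) :
    x + 2*d ∈ Δ := by
  induction d with
  | zero => simpa using hx
  | succ d ih => have := hi _ ih; rw [show x + 2*(d+1) = x + 2*d + 2 by ring]; exact this

lemma char_Dset {Δ : Set ℕ} (h : Inv22 Δ) (h4 : ∀ i < 4, i ∉ Δ) :
    ∃ m n, 2 ≤ m ∧ 2 ≤ n ∧ Δ = Dset m n := by
  classical
  obtain ⟨hi, hf⟩ := h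
  obtain ⟨N, hN⟩ := hf.bddAbove
  have hmem : ∀ x, N < x → x ∈ Δ := by
    intro x hx
    by_contra hc
    exact absurd (hN hc) (by omega)
  have he : ∃ j, 2*j ∈ Δ := ⟨N+1, hmem _ (by omega)⟩
  have ho : ∃ j, 2*j+1 ∈ Δ := ⟨N+1, hmem _ (by omega)⟩
  refine ⟨Nat.find he, Nat.find ho, ?_, ?_, ?_⟩
  · by_contra hc
    exact h4 _ (by omega) (Nat.find_spec he)
  · by_contra hc
    exact h4 _ (by omega) (Nat.find_spec ho)
  · ext x
    constructor
    · intro hx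
      rcases Nat.even_or_odd x with ⟨j, hj⟩ | ⟨j, hj⟩
      · have hj' : 2*j ∈ Δ := by rwa [show 2*j = x by omega]
        rw [show x = 2*j by omega]
        exact mem_Dset_even.mpr (Nat.find_min' he hj')
      · have hj' : 2*j+1 ∈ Δ := by rwa [show 2*j+1 = x by omega]
        rw [show x = 2*j+1 by omega]
        exact mem_Dset_odd.mpr (Nat.find_min' ho hj')
    · rintro (⟨j, rfl, hj⟩ | ⟨j, rfl, hj⟩)
      · have := Dset_add_shift hi (Nat.find_spec he) (j - Nat.find he)
        rwa [show 2 * Nat.find he + 2*(j - Nat.find he) = 2*j by omega] at this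
      · have := Dset_add_shift hi (Nat.find_spec ho) (j - Nat.find ho)
        rwa [show 2 * Nat.find ho + 1 + 2*(j - Nat.find ho) = 2*j+1 by omega] at this



open PowerSeries in
/-- `P_{0000}(q,t) = ∑ q^{area Δ} t^{codinv Δ}` over `(2,2)`-invariant subsets
disjoint from `{0,1,2,3}`, as an element of `ℤ[t][[q]]`. -/
noncomputable def P0000 : PowerSeries (Polynomial ℤ) :=
  PowerSeries.mk fun k =>
    ∑ᶠ Δ ∈ {Δ : Set ℕ | Inv22 Δ ∧ (∀ i < 4, i ∉ Δ) ∧ area Δ = k},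
      (Polynomial.X : Polynomial ℤ) ^ codinv22 Δ

lemma Dset_inj {m n m' n' : ℕ} (h : Dset m n = Dset m' n') : m = m' ∧ n = n' := by
  have h1 : 2*m ∈ Dset m' n' := h ▸ mem_Dset_even.mpr le_rfl
  have h2 : 2*m' ∈ Dset m n := h ▸ mem_Dset_even.mpr le_rfl
  have h3 : 2*n+1 ∈ Dset m' n' := h ▸ mem_Dset_odd.mpr le_rfl
  have h4 : 2*n'+1 ∈ Dset m n := h ▸ mem_Dset_odd.mpr le_rfl
  rw [mem_Dset_even] at h1 h2
  rw [mem_Dset_odd] at h3 h4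
  omega

lemma set_eq (k : ℕ) :
    {Δ : Set ℕ | Inv22 Δ ∧ (∀ i < 4, i ∉ Δ) ∧ area Δ = k}
      = (fun m => Dset m (k - m)) '' ↑(Finset.Icc 2 (k-2)) := by
  ext Δ
  simp only [Set.mem_setOf_eq, Set.mem_image, Finset.coe_Icc, Set.mem_Icc]
  constructor
  · rintro ⟨h1, h2, h3⟩
    obtain ⟨m, n, hm, hn, rfl⟩ := char_Dset h1 h2
    rw [area_Dset] at h3
    exact ⟨m, ⟨hm, by omega⟩, by rw [show k - m = n by omega]⟩
  · rintro ⟨m, ⟨hm, hm'⟩, rfl⟩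
    have hk : 4 ≤ k := by omega
    refine ⟨inv22_Dset _ _, ?_, by rw [area_Dset]; omega⟩
    rintro i hi (⟨j, rfl, hj⟩ | ⟨j, rfl, hj⟩) <;> omega

lemma coeff_P_sum (k : ℕ) :
    (PowerSeries.coeff k) P0000
      = ∑ m ∈ Finset.Icc 2 (k-2),
          (Polynomial.X : Polynomial ℤ) ^
            ((if m < k - m then 1 else 0) + (if (k - m) + 2 ≤ m then 1 else 0)) := by
  rw [P0000, PowerSeries.coeff_mk, set_eq k,
    finsum_mem_image (by
      intro a ha b hb hab
      exact (Dset_inj hab).1),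
    finsum_mem_coe_finset]
  refine Finset.sum_congr rfl fun m hm => ?_
  rw [codinv_Dset]

lemma coeff_P (k : ℕ) :
    (PowerSeries.coeff k) P0000
      = (if 4 ≤ k then 1 else 0)
        + (if 5 ≤ k then ((k - 4 : ℕ) : Polynomial ℤ) * Polynomial.X else 0) := by
  rw [coeff_P_sum]
  rcases Nat.lt_or_ge k 4 with hk | hk
  · rw [if_neg (by omega), if_neg (by omega), Finset.Icc_eq_empty (by omega), Finset.sum_empty,
      add_zero]
  · rw [if_pos hk]
    set m₀ := (k+1)/2 with hm₀
    have hmem : m₀ ∈ Finset.Icc 2 (k-2) := by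
      rw [Finset.mem_Icc]; omega
    rw [← Finset.add_sum_erase _ _ hmem]
    have h0 : (if m₀ < k - m₀ then 1 else 0) + (if (k - m₀) + 2 ≤ m₀ then 1 else 0) = 0 := by
      split_ifs <;> omega
    rw [h0, pow_zero]
    congr 1
    have hconst : ∀ m ∈ (Finset.Icc 2 (k-2)).erase m₀,
        (Polynomial.X : Polynomial ℤ) ^
          ((if m < k - m then 1 else 0) + (if (k - m) + 2 ≤ m then 1 else 0))
          = Polynomial.X := by
      intro m hm
      rw [Finset.mem_erase, Finset.mem_Icc] at hm
      have : (if m < k - m then 1 else 0) + (if (k - m) + 2 ≤ m then 1 else 0) = 1 := by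
        split_ifs <;> omega
      rw [this, pow_one]
    rw [Finset.sum_congr rfl hconst, Finset.sum_const, Finset.card_erase_of_mem hmem,
      Nat.card_Icc, nsmul_eq_mul]
    rcases Nat.lt_or_ge k 5 with hk5 | hk5
    · rw [if_neg (by omega), show k - 2 + 1 - 2 - 1 = 0 by omega]
      simp
    · rw [if_pos hk5, show k - 2 + 1 - 2 - 1 = k - 4 by omega]

open PowerSeries in
lemma one_sub_X_mul_G :
    ((1 : PowerSeries (Polynomial ℤ)) - X) * PowerSeries.mk (fun _ => (1 : Polynomial ℤ)) = 1 := by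
  ext k
  rw [sub_mul, one_mul, map_sub, coeff_one, coeff_mk]
  rw [show (X : PowerSeries (Polynomial ℤ)) * PowerSeries.mk (fun _ => (1 : Polynomial ℤ))
      = PowerSeries.mk (fun _ => (1 : Polynomial ℤ)) * X ^ 1 by rw [pow_one, mul_comm],
    coeff_mul_X_pow']
  rcases Nat.eq_zero_or_pos k with rfl | hk
  · simp
  · rw [if_pos (by omega), if_neg (by omega), coeff_mk]
    simp

open PowerSeries in
lemma coeff_GG (k : ℕ) :
    (coeff k) (PowerSeries.mk (fun _ => (1 : Polynomial ℤ))
      * PowerSeries.mk (fun _ => (1 : Polynomial ℤ))) = (k + 1 : ℕ) := by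
  rw [coeff_mul]
  simp only [coeff_mk, mul_one]
  rw [Finset.sum_const, Finset.Nat.card_antidiagonal, nsmul_eq_mul, mul_one]

open PowerSeries in
lemma P0000_eq :
    P0000 = X ^ 4 * PowerSeries.mk (fun _ => (1 : Polynomial ℤ))
      + X ^ 5 * C (Polynomial.X : Polynomial ℤ)
        * (PowerSeries.mk (fun _ => (1 : Polynomial ℤ))
          * PowerSeries.mk (fun _ => (1 : Polynomial ℤ))) := by
  ext k
  rw [map_add]
  have hA : (coeff k) (X ^ 4 * PowerSeries.mk (fun _ => (1 : Polynomial ℤ)))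
      = (if 4 ≤ k then 1 else 0) := by
    rw [mul_comm, coeff_mul_X_pow']
    split <;> simp [PowerSeries.coeff_mk]
  have hB : (coeff k)
      (X ^ 5 * C (Polynomial.X : Polynomial ℤ)
        * (PowerSeries.mk (fun _ => (1 : Polynomial ℤ))
          * PowerSeries.mk (fun _ => (1 : Polynomial ℤ))))
      = (if 5 ≤ k then ((k - 4 : ℕ) : Polynomial ℤ) * Polynomial.X else 0) := by
    rw [show (X:PowerSeries (Polynomial ℤ))^5 * C (Polynomial.X : Polynomial ℤ)
        * (PowerSeries.mk (fun _ => (1 : Polynomial ℤ)) * PowerSeries.mk (fun _ => (1 : Polynomial ℤ)))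
      = C (Polynomial.X : Polynomial ℤ)
        * (PowerSeries.mk (fun _ => (1 : Polynomial ℤ)) * PowerSeries.mk (fun _ => (1 : Polynomial ℤ)))
        * X^5 by ring, coeff_mul_X_pow']
    rcases Nat.lt_or_ge k 5 with hk | hk
    · rw [if_neg (by omega), if_neg (by omega)]
    · rw [if_pos (by omega), if_pos (by omega), coeff_C_mul, coeff_GG,
        show k - 5 + 1 = k - 4 by omega]
      ring
  rw [hA, hB, coeff_P]


open PowerSeries in
/-- `P_{0000}(q,t) = q^4/(1-q) + q^5 t/(1-q)^2`, i.e.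
`(1-q)^2 P_{0000} = q^4 (1-q) + q^5 t` in `ℤ[t][[q]]`. -/
theorem stmt16 :
    ((1 : PowerSeries (Polynomial ℤ)) - X) ^ 2 * P0000
      = X ^ 4 * (1 - X) + X ^ 5 * C (Polynomial.X : Polynomial ℤ) := by
  rw [P0000_eq]
  have h := one_sub_X_mul_G
  calc ((1 : PowerSeries (Polynomial ℤ)) - X) ^ 2
        * (X ^ 4 * PowerSeries.mk (fun _ => (1 : Polynomial ℤ))
          + X ^ 5 * C (Polynomial.X : Polynomial ℤ)
            * (PowerSeries.mk (fun _ => (1 : Polynomial ℤ))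
              * PowerSeries.mk (fun _ => (1 : Polynomial ℤ))))
      = X ^ 4 * (1 - X) * (((1 : PowerSeries (Polynomial ℤ)) - X) * PowerSeries.mk (fun _ => (1 : Polynomial ℤ)))
        + X ^ 5 * C (Polynomial.X : Polynomial ℤ)
          * ((((1 : PowerSeries (Polynomial ℤ)) - X) * PowerSeries.mk (fun _ => (1 : Polynomial ℤ)))
            * (((1 : PowerSeries (Polynomial ℤ)) - X) * PowerSeries.mk (fun _ => (1 : Polynomial ℤ)))) := by
        ring
    _ = X ^ 4 * (1 - X) + X ^ 5 * C (Polynomial.X : Polynomial ℤ) := by rw [h]; ring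
end
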